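/- (Example 2 of the paper.) Let U(x) = ‖x‖² on ℝ^d, let x, v ∈ ℝ^d with v ≠ 0, and let V ∈ (0,1). Define τ = ( -⟨x,v⟩ + sqrt( -‖v‖² log V ) ) / ‖v‖² if ⟨x,v⟩ ≤ 0, and τ = ( -⟨x,v⟩ + sqrt( ⟨x,v⟩² - ‖v‖² log V ) ) / ‖v‖² otherwise. Then τ ≥ 0 and ∫₀^τ max(0, ⟨∇U(x + s v), v⟩) ds = -log V, i.e., τ solves the bounce-time equation of the Bouncy Particle Sampler for the Gaussian energy. -/

import Mathlib

open scoped RealInnerProductSpace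

lemma maxsq_hasDerivAt (u : ℝ) :
    HasDerivAt (fun w : ℝ => (max w 0) ^ 2) (2 * max u 0) u := by
  rcases lt_trichotomy u 0 with hu | hu | hu
  · have h0 : (2 : ℝ) * max u 0 = 0 := by rw [max_eq_right hu.le]; ring
    rw [h0]
    refine (hasDerivAt_const u (0:ℝ)).congr_of_eventuallyEq ?_
    filter_upwards [Iio_mem_nhds hu] with w hw
    rw [max_eq_right (le_of_lt hw)]; ring
  · subst hu
    have h0 : (2 : ℝ) * max (0:ℝ) 0 = 0 := by simp
    rw [h0, hasDerivAt_iff_isLittleO]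
    simp only [sub_zero, smul_zero, max_self, ne_eq, OfNat.ofNat_ne_zero,
      not_false_eq_true, zero_pow, sub_zero]
    rw [Asymptotics.isLittleO_iff]
    intro ε hε
    filter_upwards [Metric.ball_mem_nhds (0:ℝ) hε] with w hw
    have habs : |max w 0| ≤ |w| := by
      rcases le_total 0 w with h | h
      · rw [max_eq_left h]
      · rw [max_eq_right h]; simp [abs_nonneg]
    have : ‖(max w 0) ^ 2‖ = |max w 0| ^ 2 := by
      rw [Real.norm_eq_abs, abs_pow]
    rw [this]
    have hwe : |w| < ε := by simpa [Real.dist_eq] using hw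
    calc |max w 0| ^ 2 ≤ |w| ^ 2 := by
          exact pow_le_pow_left₀ (abs_nonneg _) habs 2
      _ = |w| * |w| := sq (|w|) ▸ by ring
      _ ≤ ε * |w| := by nlinarith [abs_nonneg w]
      _ = ε * ‖w‖ := by rw [Real.norm_eq_abs]
  · have h0 : (2 : ℝ) * max u 0 = 2 * u := by rw [max_eq_left hu.le]
    rw [h0]
    have := hasDerivAt_pow 2 u
    norm_num at this
    refine this.congr_of_eventuallyEq ?_
    filter_upwards [Ioi_mem_nhds hu] with w hw
    rw [max_eq_left (le_of_lt hw)]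

theorem bps_gaussian_bounce_time {d : ℕ}
    (x v : EuclideanSpace ℝ (Fin d)) (hv : v ≠ 0)
    (V : ℝ) (hV : V ∈ Set.Ioo (0:ℝ) 1)
    (τ : ℝ)
    (hτ : τ = if ⟪x, v⟫ ≤ 0 then
        (-⟪x, v⟫ + Real.sqrt (-‖v‖ ^ 2 * Real.log V)) / ‖v‖ ^ 2
      else
        (-⟪x, v⟫ + Real.sqrt (⟪x, v⟫ ^ 2 - ‖v‖ ^ 2 * Real.log V)) / ‖v‖ ^ 2) :
    0 ≤ τ ∧
      ∫ s in (0:ℝ)..τ,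
          max 0 ⟪gradient (fun y : EuclideanSpace ℝ (Fin d) => ‖y‖ ^ 2) (x + s • v), v⟫
        = -Real.log V := by
  set a := ⟪x, v⟫ with ha
  set b := ‖v‖ ^ 2 with hb
  have hbpos : 0 < b := by rw [hb]; exact pow_pos (norm_pos_iff.mpr hv) 2
  have hlog : Real.log V < 0 := Real.log_neg hV.1 hV.2
  have hgrad : ∀ y : EuclideanSpace ℝ (Fin d),
      ⟪gradient (fun y : EuclideanSpace ℝ (Fin d) => ‖y‖ ^ 2) y, v⟫ = 2 * ⟪y, v⟫ := by
    intro y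
    have hfun : (fun y : EuclideanSpace ℝ (Fin d) => ‖y‖ ^ 2) =
        fun y : EuclideanSpace ℝ (Fin d) => ⟪y, y⟫ := by
      funext z; rw [real_inner_self_eq_norm_sq]
    rw [gradient, InnerProductSpace.toDual_symm_apply, hfun,
      fderiv_inner_apply ℝ differentiableAt_fun_id differentiableAt_fun_id]
    simp only [fderiv_id', ContinuousLinearMap.coe_id', id_eq]
    rw [real_inner_comm v y]
    ring
  have hint : ∀ s : ℝ,
      max 0 ⟪gradient (fun y : EuclideanSpace ℝ (Fin d) => ‖y‖ ^ 2) (x + s • v), v⟫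
        = 2 * max (a + s * b) 0 := by
    intro s
    rw [hgrad]
    have h1 : ⟪x + s • v, v⟫ = a + s * b := by
      rw [inner_add_left, real_inner_smul_left, real_inner_self_eq_norm_sq, ← ha, ← hb]
    rw [h1]
    rcases le_total (a + s * b) 0 with h | h
    · rw [max_eq_left (by linarith : 2 * (a + s * b) ≤ 0), max_eq_right h, mul_zero]
    · rw [max_eq_right (by linarith : (0:ℝ) ≤ 2 * (a + s * b)), max_eq_left h]
  set G : ℝ → ℝ := fun s => (max (a + s * b) 0) ^ 2 / b with hGdef
  have hG : ∀ s : ℝ, HasDerivAt G (2 * max (a + s * b) 0) s := by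
    intro s
    have h1 : HasDerivAt (fun s : ℝ => a + s * b) b s := by
      simpa using ((hasDerivAt_id s).mul_const b).const_add a
    have h3 := ((maxsq_hasDerivAt (a + s * b)).comp s h1).div_const b
    rw [mul_div_assoc, div_self hbpos.ne', mul_one] at h3
    exact h3
  have hIeq : (∫ s in (0:ℝ)..τ,
      max 0 ⟪gradient (fun y : EuclideanSpace ℝ (Fin d) => ‖y‖ ^ 2) (x + s • v), v⟫)
        = G τ - G 0 := by
    simp only [hint]
    exact intervalIntegral.integral_eq_sub_of_hasDerivAt (fun t _ => hG t)
      (Continuous.intervalIntegrable (by continuity) 0 τ)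
  by_cases hA : a ≤ 0
  · rw [if_pos hA] at hτ
    have hargnn : 0 ≤ -b * Real.log V := by nlinarith
    have hτb : a + τ * b = Real.sqrt (-b * Real.log V) := by
      rw [hτ]; field_simp; ring
    have hτnn : 0 ≤ τ := by
      rw [hτ]
      apply div_nonneg _ hbpos.le
      have := Real.sqrt_nonneg (-b * Real.log V)
      linarith
    refine ⟨hτnn, ?_⟩
    rw [hIeq, hGdef]
    simp only
    rw [hτb, max_eq_left (Real.sqrt_nonneg _), Real.sq_sqrt hargnn,
      zero_mul, add_zero, max_eq_right hA]
    field_simp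
    ring
  · push_neg at hA
    rw [if_neg (not_le.mpr hA)] at hτ
    have hargnn : 0 ≤ a ^ 2 - b * Real.log V := by nlinarith
    have hτb : a + τ * b = Real.sqrt (a ^ 2 - b * Real.log V) := by
      rw [hτ]; field_simp; ring
    have hsle : a ≤ Real.sqrt (a ^ 2 - b * Real.log V) :=
      (Real.le_sqrt hA.le hargnn).mpr (by nlinarith)
    have hτnn : 0 ≤ τ := by
      rw [hτ]
      apply div_nonneg _ hbpos.le
      linarith
    refine ⟨hτnn, ?_⟩
    rw [hIeq, hGdef]
    simp only
    rw [hτb, max_eq_left (Real.sqrt_nonneg _), Real.sq_sqrt hargnn,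
      zero_mul, add_zero, max_eq_left hA.le]
    field_simp
    ring
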